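/- Let τ ∈ [0, √2], let t ≥ 1, let z₁, …, z_t be real numbers with zᵢ ∈ [−2−τ, 2−τ] for each i, let Δ > 0, and suppose ∑_{i=1}^{t} zᵢ ≥ tΔ/2. Set S = ∑_{i=1}^{t} zᵢ and Q = ∑_{i=1}^{t} zᵢ², and define λ* = S / ((8+4τ)·S + 2·Q). Then λ* ∈ [0, 1/(8+4τ)] and ∑_{i=1}^{t} log(1 + λ*·zᵢ) ≥ t·Δ²/768. -/

import Mathlib

lemma log_lb_aux (x : ℝ) (hx : -(1/4 : ℝ) ≤ x) :
    x - (4/3) * x ^ 2 ≤ Real.log (1 + x) := by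
  have h1 : (0:ℝ) < 1 + x := by linarith
  have h2 : Real.log (1+x)⁻¹ ≤ (1+x)⁻¹ - 1 :=
    Real.log_le_sub_one_of_pos (by positivity)
  rw [Real.log_inv] at h2
  have h3 : x/(1+x) ≤ Real.log (1+x) := by
    have hx' : x/(1+x) = 1 - (1+x)⁻¹ := by field_simp; ring
    linarith
  have h4 : x - (4/3) * x ^ 2 ≤ x/(1+x) := by
    rw [le_div_iff₀ h1]
    nlinarith [mul_nonneg (sq_nonneg x) (by linarith : (0:ℝ) ≤ 1 + 4*x)]
  linarith

set_option maxHeartbeats 1600000 in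
/-- Deterministic growth lemma at the data-dependent bet `λ* = S/((8+4τ)S + 2Q)`:
if `τ ∈ [0, √2]`, `zᵢ ∈ [−2−τ, 2−τ]` and `∑ zᵢ ≥ tΔ/2` with `Δ > 0`, then
`λ* ∈ [0, 1/(8+4τ)]` and `∑ log(1 + λ* zᵢ) ≥ tΔ²/768`. -/
theorem log_wealth_growth_at_lambda_star
    (τ : ℝ) (hτ0 : 0 ≤ τ) (hτ2 : τ ≤ Real.sqrt 2)
    (t : ℕ) (ht : 1 ≤ t)
    (z : ℕ → ℝ) (hz : ∀ i ∈ Finset.Icc 1 t, z i ∈ Set.Icc (-2 - τ) (2 - τ))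
    (Δ : ℝ) (hΔ : 0 < Δ)
    (hsum : (t : ℝ) * Δ / 2 ≤ ∑ i ∈ Finset.Icc 1 t, z i)
    (S Q lamStar : ℝ)
    (hS : S = ∑ i ∈ Finset.Icc 1 t, z i)
    (hQ : Q = ∑ i ∈ Finset.Icc 1 t, (z i) ^ 2)
    (hlam : lamStar = S / ((8 + 4 * τ) * S + 2 * Q)) :
    lamStar ∈ Set.Icc 0 (1 / (8 + 4 * τ)) ∧
      (t : ℝ) * Δ ^ 2 / 768 ≤ ∑ i ∈ Finset.Icc 1 t, Real.log (1 + lamStar * z i) := by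
  have hτ32 : τ ≤ 3/2 := by
    have h1 := Real.sq_sqrt (by norm_num : (0:ℝ) ≤ 2)
    have h2 := Real.sqrt_nonneg 2
    nlinarith
  have ht' : (1:ℝ) ≤ (t:ℝ) := by exact_mod_cast ht
  have hcard : (Finset.Icc 1 t).card = t := by
    rw [Nat.card_Icc]; omega
  have hS0 : 0 < S := by
    rw [hS]; nlinarith
  have hQ0 : 0 ≤ Q := by
    rw [hQ]; positivity
  have hSle : S ≤ 2 * (t:ℝ) := by
    rw [hS]
    calc ∑ i ∈ Finset.Icc 1 t, z i ≤ ∑ _i ∈ Finset.Icc 1 t, (2:ℝ) := by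
          refine Finset.sum_le_sum fun i hi => ?_
          have := (hz i hi).2; linarith
      _ = 2 * (t:ℝ) := by rw [Finset.sum_const, hcard]; push_cast; ring
  have hQle : Q ≤ (2+τ)^2 * (t:ℝ) := by
    rw [hQ]
    calc ∑ i ∈ Finset.Icc 1 t, (z i)^2 ≤ ∑ _i ∈ Finset.Icc 1 t, (2+τ)^2 := by
          refine Finset.sum_le_sum fun i hi => ?_
          have h1 := (hz i hi).1
          have h2 := (hz i hi).2
          exact sq_le_sq' (by linarith) (by linarith)
      _ = (2+τ)^2 * (t:ℝ) := by rw [Finset.sum_const, hcard]; push_cast; ring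
  have h84 : (0:ℝ) < 8 + 4*τ := by linarith
  obtain ⟨D, hD⟩ : ∃ D : ℝ, D = (8 + 4*τ) * S + 2*Q := ⟨_, rfl⟩
  rw [← hD] at hlam
  have hD0 : 0 < D := by have : 0 < (8+4*τ)*S := by positivity
                         rw [hD]; linarith
  have hlam0 : 0 ≤ lamStar := by rw [hlam]; positivity
  have hlamle : lamStar ≤ 1 / (8 + 4*τ) := by
    rw [hlam, div_le_div_iff₀ hD0 h84]
    nlinarith
  have hlamD : lamStar * D = S := by
    rw [hlam]; field_simp
  refine ⟨⟨hlam0, hlamle⟩, ?_⟩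
  -- pointwise bound
  have hxq : ∀ i ∈ Finset.Icc 1 t,
      lamStar * z i - (4/3) * (lamStar * z i)^2 ≤ Real.log (1 + lamStar * z i) := by
    intro i hi
    apply log_lb_aux
    have h1 := (hz i hi).1
    have hlc : lamStar * (2+τ) ≤ 1/4 := by
      calc lamStar * (2+τ) ≤ (1/(8+4*τ)) * (2+τ) :=
            mul_le_mul_of_nonneg_right hlamle (by linarith)
        _ ≤ 1/4 := by rw [div_mul_eq_mul_div, div_le_div_iff₀ h84 (by norm_num)]; ring_nf; nlinarith
    nlinarith [mul_le_mul_of_nonneg_left (show -(2+τ) ≤ z i by linarith) hlam0]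
  have hstep : lamStar * S - (4/3) * lamStar^2 * Q ≤
      ∑ i ∈ Finset.Icc 1 t, Real.log (1 + lamStar * z i) := by
    have := Finset.sum_le_sum hxq
    have heq : ∑ i ∈ Finset.Icc 1 t, (lamStar * z i - (4/3) * (lamStar * z i)^2)
        = lamStar * S - (4/3) * lamStar^2 * Q := by
      rw [hS, hQ, Finset.mul_sum, Finset.mul_sum, ← Finset.sum_sub_distrib]
      exact Finset.sum_congr rfl fun i _ => by ring
    linarith [heq ▸ this]
  -- main arithmetic
  have h6 : (1/3) * lamStar * S ≤ lamStar * S - (4/3) * lamStar^2 * Q := by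
    nlinarith [mul_nonneg (mul_nonneg hlam0 hlam0) hS0.le,
      mul_nonneg (mul_nonneg hlam0 hlam0) hQ0, hlamD]
  have hDle : D ≤ 64 * (t:ℝ) := by
    have h1 : (8+4*τ)*S ≤ (8+4*τ)*(2*(t:ℝ)) := mul_le_mul_of_nonneg_left hSle h84.le
    have h2 : (24+16*τ+2*τ^2) * (t:ℝ) ≤ 64 * (t:ℝ) := by
      have hτsq : τ^2 ≤ 9/4 := by nlinarith
      have h3 : (24+16*τ+2*τ^2) ≤ 64 := by linarith
      exact mul_le_mul_of_nonneg_right h3 (by positivity)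
    rw [hD]; linarith [h1, h2, hQle]
  have hsum' : (t:ℝ)*Δ/2 ≤ S := hS ▸ hsum
  have hss : lamStar * S * D = S^2 := by rw [← hlamD]; ring
  have hkey : (t:ℝ)*Δ^2 * D ≤ 256 * S^2 := by
    have ha : (t:ℝ)*Δ^2 * D ≤ (t:ℝ)*Δ^2 * (64*(t:ℝ)) :=
      mul_le_mul_of_nonneg_left hDle (by positivity)
    have hb : ((t:ℝ)*Δ/2)^2 ≤ S^2 := pow_le_pow_left₀ (by positivity) hsum' 2
    linarith [ha, hb]
  have h8 : (t:ℝ)*Δ^2 ≤ 256*(lamStar*S) := by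
    rw [← mul_le_mul_iff_of_pos_right hD0]
    calc (t:ℝ)*Δ^2 * D ≤ 256*S^2 := hkey
      _ = 256*(lamStar*S)*D := by rw [← hss]; ring
  have h7 : (t:ℝ) * Δ^2 / 768 ≤ (1/3) * lamStar * S := by
    rw [div_le_iff₀ (by norm_num : (0:ℝ) < 768)]
    linarith [h8]
  linarith
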